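/- For any nonzero polynomial f(z) ∈ C[z], ‖f‖_4^4 + ‖f·f~‖_2^2 ≥ 2‖f‖_2^4, where f~(z) = f(-z) and ‖·‖_p denotes the L^p norm on the complex unit circle. -/

import Mathlib

noncomputable def circ (θ : ℝ) : ℂ := Complex.exp (θ * Complex.I)

lemma circ_continuous : Continuous circ :=
  Complex.continuous_exp.comp (Complex.continuous_ofReal.mul continuous_const)

lemma circ_add_pi (θ : ℝ) : circ (θ + Real.pi) = -circ θ := by
  simp only [circ]
  push_cast
  rw [add_mul, Complex.exp_add, Complex.exp_pi_mul_I]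
  ring

lemma circ_periodic : Function.Periodic circ (2 * Real.pi) := by
  intro θ
  simp only [circ]
  push_cast
  rw [add_mul, Complex.exp_add, Complex.exp_two_pi_mul_I, mul_one]

/-- For nonzero f, ‖f‖₄⁴ + ‖f·f~‖₂² ≥ 2‖f‖₂⁴ on the complex unit circle. -/
theorem norm_four_plus_prod_lower_bound (f : Polynomial ℂ) (hf : f ≠ 0) :
    2 * ((1 / (2 * Real.pi)) * ∫ θ in (0:ℝ)..(2 * Real.pi), ‖f.eval (circ θ)‖ ^ 2) ^ 2
      ≤ ((1 / (2 * Real.pi)) * ∫ θ in (0:ℝ)..(2 * Real.pi), ‖f.eval (circ θ)‖ ^ 4)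
        + ((1 / (2 * Real.pi)) * ∫ θ in (0:ℝ)..(2 * Real.pi),
            ‖f.eval (circ θ) * f.eval (-(circ θ))‖ ^ 2) := by
  have hπ : (0:ℝ) < 2 * Real.pi := by positivity
  set T : ℝ := 2 * Real.pi with hT
  set g : ℝ → ℝ := fun θ => ‖f.eval (circ θ)‖ ^ 2 with hg
  have hcont : Continuous g := ((f.continuous).comp circ_continuous).norm.pow 2
  have hgp : Function.Periodic g T := fun θ => by
    simp only [hg]
    rw [circ_periodic θ]
  -- shift lemma
  have shift : ∀ u : ℝ → ℝ, Function.Periodic u T →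
      (∫ θ in (0:ℝ)..T, u (θ + Real.pi)) = ∫ θ in (0:ℝ)..T, u θ := by
    intro u hu
    rw [intervalIntegral.integral_comp_add_right u Real.pi]
    have h2 := hu.intervalIntegral_add_eq Real.pi 0
    rw [zero_add] at h2
    rw [show (0:ℝ) + Real.pi = Real.pi by ring, show T + Real.pi = Real.pi + T by ring]
    exact h2
  set A : ℝ := ∫ θ in (0:ℝ)..T, g θ with hA
  set B : ℝ := ∫ θ in (0:ℝ)..T, (g θ)^2 with hB
  set C : ℝ := ∫ θ in (0:ℝ)..T, g θ * g (θ + Real.pi) with hC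
  -- rewrite the goal integrals
  have e1 : (∫ θ in (0:ℝ)..T, ‖f.eval (circ θ)‖ ^ 4) = B := by
    rw [hB]
    congr 1
    funext θ
    simp only [hg]
    ring
  have e2 : (∫ θ in (0:ℝ)..T, ‖f.eval (circ θ) * f.eval (-(circ θ))‖ ^ 2) = C := by
    rw [hC]
    congr 1
    funext θ
    simp only [hg, ← circ_add_pi θ, norm_mul]
    ring
  -- integrability facts
  have hgi : IntervalIntegrable g MeasureTheory.volume 0 T := hcont.intervalIntegrable 0 T
  have hcont' : Continuous (fun θ => g (θ + Real.pi)) := hcont.comp (by continuity)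
  -- the combined function h
  set h : ℝ → ℝ := fun θ => g θ + g (θ + Real.pi) with hh
  have hhcont : Continuous h := hcont.add hcont'
  have hS : (∫ θ in (0:ℝ)..T, h θ) = 2 * A := by
    rw [hh]
    rw [intervalIntegral.integral_add hgi (hcont'.intervalIntegrable 0 T)]
    rw [shift g hgp, ← hA]
    ring
  have hQ : (∫ θ in (0:ℝ)..T, (h θ)^2) = 2 * B + 2 * C := by
    have expand : ∀ θ, (h θ)^2 = (g θ)^2 + (2 * (g θ * g (θ + Real.pi)) + (fun t => (g t)^2) (θ + Real.pi)) := by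
      intro θ; simp only [hh]; ring
    simp only [expand]
    rw [intervalIntegral.integral_add (f := fun θ => g θ ^ 2)
        (g := fun θ => 2 * (g θ * g (θ + Real.pi)) + g (θ + Real.pi) ^ 2)
        ((hcont.pow 2).intervalIntegrable 0 T)
        (((hcont.mul hcont').intervalIntegrable 0 T).const_mul 2 |>.add
          ((hcont'.pow 2).intervalIntegrable 0 T)),
      intervalIntegral.integral_add (f := fun θ => 2 * (g θ * g (θ + Real.pi)))
        (g := fun θ => g (θ + Real.pi) ^ 2) (((hcont.mul hcont').intervalIntegrable 0 T).const_mul 2)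
        ((hcont'.pow 2).intervalIntegrable 0 T),
      intervalIntegral.integral_const_mul]
    rw [shift (fun t => (g t)^2) (fun θ => by simp only [hgp θ])]
    rw [← hB, ← hC]
    ring
  -- Jensen / Cauchy-Schwarz for h
  set m : ℝ := (2 * A) / T with hm
  have key : 0 ≤ ∫ θ in (0:ℝ)..T, (h θ - m)^2 := by
    apply intervalIntegral.integral_nonneg (le_of_lt hπ)
    intro u _
    positivity
  have expand2 : (∫ θ in (0:ℝ)..T, (h θ - m)^2)
      = (2 * B + 2 * C) - 2 * m * (2 * A) + m^2 * T := by
    have e : ∀ θ, (h θ - m)^2 = (h θ)^2 - (2*m) * h θ + m^2 := fun θ => by ring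
    simp only [e]
    rw [intervalIntegral.integral_add (f := fun θ => h θ ^ 2 - 2 * m * h θ) (g := fun _ => m ^ 2)
        (((hhcont.pow 2).intervalIntegrable 0 T).sub ((hhcont.intervalIntegrable 0 T).const_mul (2*m)))
        (intervalIntegrable_const),
      intervalIntegral.integral_sub (f := fun θ => h θ ^ 2) (g := fun θ => 2 * m * h θ) ((hhcont.pow 2).intervalIntegrable 0 T)
        ((hhcont.intervalIntegrable 0 T).const_mul (2*m)),
      intervalIntegral.integral_const_mul, hQ, hS, intervalIntegral.integral_const]
    simp only [sub_zero, smul_eq_mul]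
    ring
  rw [expand2] at key
  rw [e1, e2]
  have hTpos := hπ
  rw [hm] at key
  have key2 : 4 * A^2 ≤ T * (2 * B + 2 * C) := by
    have h2 : 2*(2*A/T)*(2*A) - (2*A/T)^2*T = 4*A^2/T := by field_simp; ring
    have h3 : 4*A^2/T ≤ 2*B+2*C := by linarith
    calc 4*A^2 = (4*A^2/T)*T := by field_simp
      _ ≤ (2*B+2*C)*T := mul_le_mul_of_nonneg_right h3 hTpos.le
      _ = T*(2*B+2*C) := by ring
  have hgoal : 2*(1/T*A)^2 = 2*A^2/T^2 := by ring
  have hrhs : 1/T*B + 1/T*C = (B+C)/T := by ring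
  rw [hgoal, hrhs, div_le_div_iff₀ (by positivity) hTpos]
  have hmul := mul_le_mul_of_nonneg_left key2 hTpos.le
  nlinarith [hmul]
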